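/- Let E be a finite-dimensional real normed vector space and L ⊆ E a ℤ-lattice. If S ⊆ E ⧸ L is a preconnected subset containing 0 all of whose elements are torsion (for every x ∈ S there is a nonzero integer n with n • x = 0), then S = {0}. -/
import Mathlib


/-- A preconnected subset of a real torus containing `0` all of whose elements are
torsion is reduced to `{0}`. -/
theorem stmt_3 {E : Type*}
    [NormedAddCommGroup E] [NormedSpace ℝ E] [FiniteDimensional ℝ E]
    (L : Submodule ℤ E) [DiscreteTopology L] [IsZLattice ℝ L]
    (S : Set (E ⧸ L.toAddSubgroup)) (hconn : IsPreconnected S) (h0 : 0 ∈ S)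
    (htors : ∀ x ∈ S, ∃ n : ℤ, n ≠ 0 ∧ n • x = 0) :
    S = {0} := by
  haveI : DiscreteTopology L.toAddSubgroup := ‹DiscreteTopology L›
  haveI : IsClosed (L.toAddSubgroup : Set E) := AddSubgroup.isClosed_of_discrete
  -- S is countable: it consists of torsion points
  have hScount : S.Countable := by
    have hsub : S ⊆ ⋃ n ∈ {n : ℤ | n ≠ 0},
        (QuotientAddGroup.mk '' ((fun w : E => (n : ℝ)⁻¹ • w) '' (L : Set E))) := by
      intro x hx
      obtain ⟨n, hn, hnx⟩ := htors x hx
      obtain ⟨v, rfl⟩ := QuotientAddGroup.mk_surjective x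
      have hv : n • v ∈ L.toAddSubgroup := by
        rwa [← QuotientAddGroup.mk_zsmul, QuotientAddGroup.eq_zero_iff] at hnx
      have hvv : (n : ℝ)⁻¹ • (n • v) = v := by
        rw [← Int.cast_smul_eq_zsmul ℝ n v, smul_smul,
          inv_mul_cancel₀ (by exact_mod_cast hn), one_smul]
      exact Set.mem_biUnion hn ⟨(n : ℝ)⁻¹ • (n • v), ⟨n • v, hv, rfl⟩, by rw [hvv]⟩
    refine Set.Countable.mono hsub ?_
    refine Set.Countable.biUnion (Set.to_countable _) fun n _ => ?_
    have hL : (L : Set E).Countable :=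
      Set.countable_coe_iff.mp (inferInstance : Countable L)
    exact ((hL.image _).image _)
  -- suppose S ≠ {0}
  by_contra hS
  obtain ⟨a, haS, ha⟩ : ∃ a ∈ S, a ≠ 0 := by
    by_contra h
    push_neg at h
    exact hS (Set.eq_singleton_iff_unique_mem.mpr ⟨h0, h⟩)
  have hr : (0 : ℝ) < ‖a‖ := norm_pos_iff.mpr ha
  have himg : IsPreconnected ((fun x => ‖x‖) '' S) :=
    hconn.image _ continuous_norm.continuousOn
  have hIcc : Set.Icc (0 : ℝ) ‖a‖ ⊆ (fun x => ‖x‖) '' S :=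
    himg.Icc_subset ⟨0, h0, norm_zero⟩ ⟨a, haS, rfl⟩
  have hcnt : (Set.Icc (0 : ℝ) ‖a‖).Countable :=
    (hScount.image _).mono hIcc
  have := Cardinal.le_aleph0_iff_set_countable.mpr hcnt
  rw [Cardinal.mk_Icc_real hr] at this
  exact absurd this Cardinal.aleph0_lt_continuum.not_ge
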